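/- Let Q_{12}={3,6,15,19}, Q_{34}={6,9,15,19}, Q_{13}={6,15,23,24}, Q_{24}={15,19,23,24}, Q_{14}={3,9,15,24}, Q_{23}={3,9,15,23}, and let P̃_{ij} be the image under I^{-1} of the coordinate plane P_{ij} ⊂ F_2^4. Then for each pair ij, the union Q_{ij} ∪ P̃_{ij} is an octad of the extended binary Golay code, and every Q_{ij} avoids the label 5. -/
import Mathlib


/-- The indicator vector in `𝔽₂²⁴` of a set of labels in `{1,…,24}`
(coordinate `i : Fin 24` carries the label `i+1`). -/
def indic (s : Finset ℕ) : Fin 24 → ZMod 2 := fun i => if (i : ℕ) + 1 ∈ s then 1 else 0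

/-- An explicit basis of the extended binary Golay code, given by the support sets
of nine octads and three dodecads. -/
def golayBasisSets : Fin 12 → Finset ℕ :=
  ![{1,2,16,18,5,12,22,3}, {7,4,19,10,12,15,8,16}, {23,3,9,19,13,18,8,11},
    {6,3,22,4,21,17,15,9}, {20,10,11,17,14,13,22,12}, {24,2,10,19,9,5,14,21},
    {8,7,15,17,11,23,18,16}, {16,1,2,21,4,7,8,18}, {18,1,16,8,23,13,14,5},
    {8,7,15,9,19,23,4,22,13,18,1,16}, {18,23,13,22,3,1,11,10,2,16,7,8},
    {16,1,2,10,12,7,5,9,15,8,23,18}]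

/-- The extended binary Golay code `𝒢₂₄ ⊂ 𝔽₂²⁴`. -/
def golayCode : Submodule (ZMod 2) (Fin 24 → ZMod 2) :=
  Submodule.span (ZMod 2) (Set.range fun i => indic (golayBasisSets i))

/-- The weight of a vector in `𝔽₂²⁴`: the number of nonzero coordinates. -/
def weight (v : Fin 24 → ZMod 2) : ℕ := (Finset.univ.filter fun i => v i ≠ 0).card

/-- The hypercube `𝔽₂⁴`. -/
abbrev F16 := Fin 4 → ZMod 2

/-- Shorthand for a vector in `𝔽₂⁴`. -/
def v4 (a b c d : ZMod 2) : F16 := ![a, b, c, d]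

/-- The complement of the octad `𝒪₉ = {3,5,6,9,15,19,23,24}` in `{1,…,24}`. -/
def O9compl : Finset ℕ := {1, 2, 4, 7, 8, 10, 11, 12, 13, 14, 16, 17, 18, 20, 21, 22}

/-- The labelling map `I` from the complement of `𝒪₉` to the hypercube `𝔽₂⁴`. -/
def Imap : ℕ → F16
  | 1 => v4 0 0 0 0
  | 2 => v4 0 0 1 1
  | 4 => v4 0 1 1 0
  | 7 => v4 1 1 1 1
  | 8 => v4 1 0 0 1
  | 10 => v4 1 1 0 1
  | 11 => v4 1 0 0 0
  | 12 => v4 0 1 1 1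
  | 13 => v4 0 1 0 0
  | 14 => v4 0 0 1 0
  | 16 => v4 1 0 1 0
  | 17 => v4 0 0 0 1
  | 18 => v4 0 1 0 1
  | 20 => v4 1 1 1 0
  | 21 => v4 1 1 0 0
  | 22 => v4 1 0 1 1
  | _ => v4 0 0 0 0

/-- The coordinate plane `P_{ij} = {a ∈ 𝔽₂⁴ : a_k = 0 for k ≠ i, j}`. -/
def Pplane (i j : Fin 4) : Finset F16 :=
  Finset.univ.filter fun a => ∀ k, k ≠ i → k ≠ j → a k = 0

/-- The six index pairs `12, 34, 13, 24, 14, 23` (zero-based). -/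
def pairIdx : Fin 6 → Fin 4 × Fin 4 := ![(0,1), (2,3), (0,2), (1,3), (0,3), (1,2)]

/-- The quadruplets `Q_{ij} ⊂ 𝒪₉` in the order `12, 34, 13, 24, 14, 23`. -/
def Qsets : Fin 6 → Finset ℕ :=
  ![{3,6,15,19}, {6,9,15,19}, {6,15,23,24}, {15,19,23,24}, {3,9,15,24}, {3,9,15,23}]

/-- `P̃_{ij} = I⁻¹(P_{ij})`: the labels in the complement of `𝒪₉` mapping into the
coordinate plane `P_{ij}` under `I`. -/
def Ptilde (s : Fin 6) : Finset ℕ :=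
  O9compl.filter fun n => Imap n ∈ Pplane (pairIdx s).1 (pairIdx s).2

lemma basisMem (i : Fin 12) : indic (golayBasisSets i) ∈ golayCode :=
  Submodule.subset_span ⟨i, rfl⟩

/-- For each pair `ij` among `12, 34, 13, 24, 14, 23`, the union `Q_{ij} ∪ P̃_{ij}` is
an octad of the extended binary Golay code, and every `Q_{ij}` avoids the label 5. -/
theorem Qij_octads :
    ∀ s : Fin 6,
      indic (Qsets s ∪ Ptilde s) ∈ golayCode ∧
      weight (indic (Qsets s ∪ Ptilde s)) = 8 ∧
      5 ∉ Qsets s := by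
  intro s
  fin_cases s
  · exact ⟨by show indic (Qsets 0 ∪ Ptilde 0) ∈ golayCode; rw [show indic (Qsets 0 ∪ Ptilde 0) = indic (golayBasisSets 3) + indic (golayBasisSets 6) + indic (golayBasisSets 9) from by decide]; exact add_mem (add_mem (basisMem 3) (basisMem 6)) (basisMem 9), by decide, by decide⟩
  · exact ⟨by show indic (Qsets 1 ∪ Ptilde 1) ∈ golayCode; rw [show indic (Qsets 1 ∪ Ptilde 1) = indic (golayBasisSets 0) + indic (golayBasisSets 1) + indic (golayBasisSets 2) + indic (golayBasisSets 3) + indic (golayBasisSets 7) + indic (golayBasisSets 8) + indic (golayBasisSets 9) + indic (golayBasisSets 10) from by decide]; exact add_mem (add_mem (add_mem (add_mem (add_mem (add_mem (add_mem (basisMem 0) (basisMem 1)) (basisMem 2)) (basisMem 3)) (basisMem 7)) (basisMem 8)) (basisMem 9)) (basisMem 10), by decide, by decide⟩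
  · exact ⟨by show indic (Qsets 2 ∪ Ptilde 2) ∈ golayCode; rw [show indic (Qsets 2 ∪ Ptilde 2) = indic (golayBasisSets 0) + indic (golayBasisSets 1) + indic (golayBasisSets 3) + indic (golayBasisSets 5) + indic (golayBasisSets 6) from by decide]; exact add_mem (add_mem (add_mem (add_mem (basisMem 0) (basisMem 1)) (basisMem 3)) (basisMem 5)) (basisMem 6), by decide, by decide⟩
  · exact ⟨by show indic (Qsets 3 ∪ Ptilde 3) ∈ golayCode; rw [show indic (Qsets 3 ∪ Ptilde 3) = indic (golayBasisSets 0) + indic (golayBasisSets 2) + indic (golayBasisSets 5) + indic (golayBasisSets 6) + indic (golayBasisSets 7) + indic (golayBasisSets 8) + indic (golayBasisSets 9) + indic (golayBasisSets 11) from by decide]; exact add_mem (add_mem (add_mem (add_mem (add_mem (add_mem (add_mem (basisMem 0) (basisMem 2)) (basisMem 5)) (basisMem 6)) (basisMem 7)) (basisMem 8)) (basisMem 9)) (basisMem 11), by decide, by decide⟩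
  · exact ⟨by show indic (Qsets 4 ∪ Ptilde 4) ∈ golayCode; rw [show indic (Qsets 4 ∪ Ptilde 4) = indic (golayBasisSets 0) + indic (golayBasisSets 5) + indic (golayBasisSets 6) + indic (golayBasisSets 7) + indic (golayBasisSets 8) + indic (golayBasisSets 9) + indic (golayBasisSets 11) from by decide]; exact add_mem (add_mem (add_mem (add_mem (add_mem (add_mem (basisMem 0) (basisMem 5)) (basisMem 6)) (basisMem 7)) (basisMem 8)) (basisMem 9)) (basisMem 11), by decide, by decide⟩
  · exact ⟨by show indic (Qsets 5 ∪ Ptilde 5) ∈ golayCode; rw [show indic (Qsets 5 ∪ Ptilde 5) = indic (golayBasisSets 0) + indic (golayBasisSets 1) + indic (golayBasisSets 2) + indic (golayBasisSets 8) + indic (golayBasisSets 10) from by decide]; exact add_mem (add_mem (add_mem (add_mem (basisMem 0) (basisMem 1)) (basisMem 2)) (basisMem 8)) (basisMem 10), by decide, by decide⟩
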